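/- Let α > −1 be a real number and let d ≥ 1, s ≥ 0, and i with 0 ≤ i ≤ d − 1 be integers. For ℓ ∈ ℕ define W_ℓ = [∏_{m=1}^{d} (ℓd + m + i)/(ℓd + m + i + α + 1)] · [∏_{q=1}^{s} (ℓd + q + i + d)/(ℓd + q + i + d + α + 1)]². Then the sequence (log W_ℓ)_{ℓ≥0} is completely alternating. (W_ℓ is the square of the ℓ-th weight of the shift acting on the orbit with founder i in the direct sum decomposition of the Toeplitz operator T_{z̄^s z^{s+d}} on the weighted Bergman space A²_α(𝔻); a shift whose squared weights form a log completely alternating sequence is moment infinitely divisible (MID). Hence each of the d shifts in the decomposition is MID and in particular subnormal, so T_{z̄^s z^{s+d}} is subnormal and hyponormal, and its adjoint is not hyponormal when d ≥ 1.) -/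

import Mathlib

/-- A sequence `a : ℕ → ℝ` is *completely alternating* if for every `k ≥ 1` and every `m`,
`∑_{i=0}^{k} (−1)ⁱ·binom(k,i)·a_{m+i} ≤ 0`. -/
def CompletelyAlternating (a : ℕ → ℝ) : Prop :=
  ∀ k : ℕ, 1 ≤ k → ∀ m : ℕ,
    ∑ i ∈ Finset.range (k + 1), (-1 : ℝ) ^ i * (k.choose i) * a (m + i) ≤ 0

lemma alt_sum_pascal (k : ℕ) (f : ℕ → ℝ) :
    ∑ j ∈ Finset.range (k+2), (-1:ℝ)^j * ((k+1).choose j) * f j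
    = ∑ j ∈ Finset.range (k+1), (-1:ℝ)^j * (k.choose j) * f j
      - ∑ j ∈ Finset.range (k+1), (-1:ℝ)^j * (k.choose j) * f (j+1) := by
  have h0 : ∑ j ∈ Finset.range (k+2), (-1:ℝ)^j * ((k+1).choose j) * f j
      = (∑ j ∈ Finset.range (k+1), (-1:ℝ)^(j+1) * ((k+1).choose (j+1)) * f (j+1)) + f 0 := by
    rw [Finset.sum_range_succ']
    simp
  have h1 : ∀ j ∈ Finset.range (k+1), (-1:ℝ)^(j+1) * ((k+1).choose (j+1)) * f (j+1)
      = (-((-1:ℝ)^j * (k.choose j) * f (j+1))) + (-1:ℝ)^(j+1) * (k.choose (j+1)) * f (j+1) := by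
    intro j _
    have : (((k+1).choose (j+1) : ℝ)) = (k.choose j : ℝ) + (k.choose (j+1) : ℝ) := by
      exact_mod_cast Nat.choose_succ_succ k j
    rw [this]; ring
  rw [h0, Finset.sum_congr rfl h1, Finset.sum_add_distrib]
  have h2 : ∑ j ∈ Finset.range (k+1), (-1:ℝ)^(j+1) * (k.choose (j+1)) * f (j+1)
      = (∑ j ∈ Finset.range (k+1), (-1:ℝ)^j * (k.choose j) * f j) - f 0 := by
    rw [Finset.sum_range_succ' (fun j => (-1:ℝ)^j * (k.choose j) * f j) k]
    have : (-1:ℝ)^(k+1) * (k.choose (k+1)) * f (k+1) = 0 := by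
      simp [Nat.choose_succ_self]
    rw [Finset.sum_range_succ, this]
    simp
  rw [h2, Finset.sum_neg_distrib]
  ring

lemma alt_inv_closed (t : ℝ) (ht : 0 < t) :
    ∀ (k : ℕ) (x : ℝ), 0 < x →
    ∑ j ∈ Finset.range (k+1), (-1:ℝ)^j * (k.choose j) * (x + j*t)⁻¹
    = (k.factorial * t^k) / ∏ j ∈ Finset.range (k+1), (x + j*t) := by
  intro k
  induction k with
  | zero => intro x hx; simp
  | succ k IH =>
    intro x hx
    have hxt : 0 < x + t := by linarith
    have hP : ∀ y : ℝ, 0 < y → 0 < ∏ j ∈ Finset.range (k+1), (y + j*t) := by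
      intro y hy
      exact Finset.prod_pos (fun j _ => by positivity)
    have hQ : 0 < ∏ j ∈ Finset.range (k+2), (x + j*t) :=
      Finset.prod_pos (fun j _ => by positivity)
    rw [alt_sum_pascal k (fun j => (x + j*t)⁻¹)]
    have h2 : ∑ j ∈ Finset.range (k+1), (-1:ℝ)^j * (k.choose j) * (x + (↑(j+1))*t)⁻¹
        = ((k.factorial : ℝ) * t^k) / ∏ j ∈ Finset.range (k+1), ((x+t) + j*t) := by
      rw [← IH (x+t) hxt]
      apply Finset.sum_congr rfl
      intro j _
      push_cast
      ring_nf
    have h2' : ∑ j ∈ Finset.range (k+1), (-1:ℝ)^j * (k.choose j) * ((fun j : ℕ => (x + j*t)⁻¹) (j+1))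
        = ((k.factorial : ℝ) * t^k) / ∏ j ∈ Finset.range (k+1), ((x+t) + j*t) := by
      simpa using h2
    rw [IH x hx, h2']
    -- now algebra with products
    have e1 : ∏ j ∈ Finset.range (k+2), (x + j*t)
        = (∏ j ∈ Finset.range (k+1), (x + j*t)) * (x + (k+1)*t) := by
      rw [Finset.prod_range_succ]; push_cast; ring
    have e2 : ∏ j ∈ Finset.range (k+2), (x + j*t)
        = (∏ j ∈ Finset.range (k+1), ((x+t) + j*t)) * x := by
      rw [Finset.prod_range_succ']
      simp only [Nat.cast_zero, zero_mul, add_zero]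
      congr 1
      apply Finset.prod_congr rfl
      intro j _; push_cast; ring
    have hPx := hP x hx
    have hPxt := hP (x+t) hxt
    rw [div_sub_div _ _ hPx.ne' hPxt.ne', div_eq_div_iff (mul_pos hPx hPxt).ne' hQ.ne']
    push_cast [Nat.factorial_succ]
    linear_combination ((k.factorial : ℝ)*t^k) * (∏ j ∈ Finset.range (k+1), ((x+t) + j*t)) * e1
      - ((k.factorial : ℝ)*t^k) * (∏ j ∈ Finset.range (k+1), (x + j*t)) * e2

lemma log_alt_sum (t β : ℝ) (ht : 0 < t) (hβ : 0 < β) (k : ℕ) (x : ℝ) (hx : 0 < x) :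
    ∑ j ∈ Finset.range (k+1), (-1:ℝ)^j * (k.choose j) *
      (Real.log (x + j*t) - Real.log (x + j*t + β)) ≤ 0 := by
  have hxj : ∀ j : ℕ, 0 < x + j*t := fun j => by positivity
  -- integral representation of each term
  have hterm : ∀ j : ℕ, Real.log (x + j*t) - Real.log (x + j*t + β)
      = -(∫ u in (0:ℝ)..β, (x + j*t + u)⁻¹) := by
    intro j
    have h1 : (∫ u in (0:ℝ)..β, (x + j*t + u)⁻¹)
        = ∫ u in (x + j*t)..(x + j*t + β), u⁻¹ := by
      have := intervalIntegral.integral_comp_add_left (f := fun u : ℝ => u⁻¹)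
        (a := (0:ℝ)) (b := β) (x + j*t)
      simpa using this
    rw [h1, integral_inv_of_pos (hxj j) (by linarith [hxj j]),
      Real.log_div (by linarith [hxj j]) (hxj j).ne']
    ring
  have hint : ∀ j ∈ Finset.range (k+1), IntervalIntegrable
      (fun u : ℝ => (-1:ℝ)^j * (k.choose j) * (x + j*t + u)⁻¹) MeasureTheory.volume 0 β := by
    intro j _
    apply ContinuousOn.intervalIntegrable
    apply ContinuousOn.mul continuousOn_const
    apply ContinuousOn.inv₀ (continuousOn_const.add continuousOn_id)
    intro u hu
    rw [Set.uIcc_of_le hβ.le] at hu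
    have := hu.1
    have := hxj j
    exact (by linarith : (0:ℝ) < x + j*t + u).ne'
  calc ∑ j ∈ Finset.range (k+1), (-1:ℝ)^j * (k.choose j) *
        (Real.log (x + j*t) - Real.log (x + j*t + β))
      = -(∑ j ∈ Finset.range (k+1), ∫ u in (0:ℝ)..β,
          (-1:ℝ)^j * (k.choose j) * (x + j*t + u)⁻¹) := by
        rw [← Finset.sum_neg_distrib]
        apply Finset.sum_congr rfl
        intro j _
        rw [hterm j, intervalIntegral.integral_const_mul]
        ring
    _ = -(∫ u in (0:ℝ)..β, ∑ j ∈ Finset.range (k+1),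
          (-1:ℝ)^j * (k.choose j) * (x + j*t + u)⁻¹) := by
        rw [intervalIntegral.integral_finset_sum hint]
    _ ≤ 0 := by
        rw [neg_nonpos]
        apply intervalIntegral.integral_nonneg hβ.le
        intro u hu
        have hxu : 0 < x + u := by linarith [hu.1]
        have : ∑ j ∈ Finset.range (k+1), (-1:ℝ)^j * (k.choose j) * (x + j*t + u)⁻¹
            = ∑ j ∈ Finset.range (k+1), (-1:ℝ)^j * (k.choose j) * ((x + u) + j*t)⁻¹ := by
          apply Finset.sum_congr rfl; intro j _; ring_nf
        rw [this, alt_inv_closed t ht k (x+u) hxu]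
        have hQ : 0 < ∏ j ∈ Finset.range (k+1), ((x+u) + j*t) :=
          Finset.prod_pos (fun j _ => by positivity)
        positivity

lemma factor_alt (α : ℝ) (hα : -1 < α) (d : ℕ) (hd : 1 ≤ d) (c : ℕ) (hc : 1 ≤ c) (k m0 : ℕ) :
    ∑ j ∈ Finset.range (k+1), (-1:ℝ)^j * (k.choose j) *
      (Real.log (((m0+j)*d + c : ℕ):ℝ) - Real.log ((((m0+j)*d + c : ℕ):ℝ) + α + 1)) ≤ 0 := by
  have hx : (0:ℝ) < (m0:ℝ)*(d:ℝ) + (c:ℝ) := by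
    have : (1:ℝ) ≤ (c:ℝ) := by exact_mod_cast hc
    positivity
  have key := log_alt_sum (d:ℝ) (α+1) (by exact_mod_cast hd) (by linarith)
    k ((m0:ℝ)*(d:ℝ) + (c:ℝ)) hx
  have hcast : ∀ j : ℕ, (((m0+j)*d + c : ℕ):ℝ) = ((m0:ℝ)*(d:ℝ) + (c:ℝ)) + (j:ℝ)*(d:ℝ) := by
    intro j; push_cast; ring
  calc ∑ j ∈ Finset.range (k+1), (-1:ℝ)^j * (k.choose j) *
        (Real.log (((m0+j)*d + c : ℕ):ℝ) - Real.log ((((m0+j)*d + c : ℕ):ℝ) + α + 1))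
      = ∑ j ∈ Finset.range (k+1), (-1:ℝ)^j * (k.choose j) *
        (Real.log (((m0:ℝ)*(d:ℝ) + (c:ℝ)) + (j:ℝ)*(d:ℝ))
          - Real.log ((((m0:ℝ)*(d:ℝ) + (c:ℝ)) + (j:ℝ)*(d:ℝ)) + (α+1))) := by
        apply Finset.sum_congr rfl
        intro j _
        rw [hcast j]
        ring_nf
    _ ≤ 0 := key

/-- Let `α > −1`, `d ≥ 1`, `s ≥ 0`, `0 ≤ i ≤ d − 1`, and for `ℓ ∈ ℕ` let
`W_ℓ = [∏_{m=1}^{d} (ℓd+m+i)/(ℓd+m+i+α+1)]·[∏_{q=1}^{s} (ℓd+q+i+d)/(ℓd+q+i+d+α+1)]²`.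
Then `(log W_ℓ)` is completely alternating.  `W_ℓ` is the squared `ℓ`-th weight of the
shift on the orbit with founder `i` in the decomposition of `T_{z̄ˢ z^{s+d}}` on the
weighted Bergman space `A²_α(𝔻)`; hence each of the `d` shifts in the decomposition is
moment infinitely divisible, in particular subnormal. -/
theorem log_weights_weighted_bergman_completely_alternating
    (α : ℝ) (hα : -1 < α) (d s i : ℕ) (hd : 1 ≤ d) (hi : i ≤ d - 1) :
    CompletelyAlternating (fun ℓ =>
      Real.log
        ((∏ m ∈ Finset.Icc 1 d,
            ((ℓ * d + m + i : ℕ) : ℝ) / (((ℓ * d + m + i : ℕ) : ℝ) + α + 1)) *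
          (∏ q ∈ Finset.Icc 1 s,
            ((ℓ * d + q + i + d : ℕ) : ℝ) / (((ℓ * d + q + i + d : ℕ) : ℝ) + α + 1)) ^ 2)) := by
  intro k hk m0
  -- generic positivity facts
  have hpos : ∀ n : ℕ, 1 ≤ n → (0:ℝ) < (n:ℝ) ∧ (0:ℝ) < (n:ℝ) + α + 1 := by
    intro n hn
    have h1 : (1:ℝ) ≤ (n:ℝ) := by exact_mod_cast hn
    constructor <;> linarith
  have hlog : ∀ ℓ : ℕ,
      Real.log
        ((∏ m ∈ Finset.Icc 1 d,
            ((ℓ * d + m + i : ℕ) : ℝ) / (((ℓ * d + m + i : ℕ) : ℝ) + α + 1)) *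
          (∏ q ∈ Finset.Icc 1 s,
            ((ℓ * d + q + i + d : ℕ) : ℝ) / (((ℓ * d + q + i + d : ℕ) : ℝ) + α + 1)) ^ 2)
      = (∑ m ∈ Finset.Icc 1 d,
          (Real.log ((ℓ*d + (m+i) : ℕ):ℝ) - Real.log (((ℓ*d + (m+i) : ℕ):ℝ) + α + 1)))
        + ∑ q ∈ Finset.Icc 1 s,
          2 * (Real.log ((ℓ*d + (q+i+d) : ℕ):ℝ) - Real.log (((ℓ*d + (q+i+d) : ℕ):ℝ) + α + 1)) := by
    intro ℓ
    have hf1 : ∀ m ∈ Finset.Icc 1 d, (0:ℝ) <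
        ((ℓ * d + m + i : ℕ) : ℝ) / (((ℓ * d + m + i : ℕ) : ℝ) + α + 1) := by
      intro m hm
      obtain ⟨h1, h2⟩ := hpos (ℓ*d + m + i) (by have := (Finset.mem_Icc.mp hm).1; omega)
      positivity
    have hf2 : ∀ q ∈ Finset.Icc 1 s, (0:ℝ) <
        ((ℓ * d + q + i + d : ℕ) : ℝ) / (((ℓ * d + q + i + d : ℕ) : ℝ) + α + 1) := by
      intro q hq
      obtain ⟨h1, h2⟩ := hpos (ℓ*d + q + i + d) (by have := (Finset.mem_Icc.mp hq).1; omega)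
      positivity
    have hA : (0:ℝ) < ∏ m ∈ Finset.Icc 1 d,
        ((ℓ * d + m + i : ℕ) : ℝ) / (((ℓ * d + m + i : ℕ) : ℝ) + α + 1) :=
      Finset.prod_pos hf1
    have hB : (0:ℝ) < ∏ q ∈ Finset.Icc 1 s,
        ((ℓ * d + q + i + d : ℕ) : ℝ) / (((ℓ * d + q + i + d : ℕ) : ℝ) + α + 1) :=
      Finset.prod_pos hf2
    rw [Real.log_mul hA.ne' (by positivity), Real.log_pow,
      Real.log_prod (fun m hm => (hf1 m hm).ne'),
      Real.log_prod (fun q hq => (hf2 q hq).ne')]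
    rw [Finset.mul_sum]
    congr 1
    · apply Finset.sum_congr rfl
      intro m hm
      obtain ⟨h1, h2⟩ := hpos (ℓ*d + m + i) (by have := (Finset.mem_Icc.mp hm).1; omega)
      rw [Real.log_div h1.ne' h2.ne']
      have : ℓ*d + (m+i) = ℓ*d + m + i := by omega
      rw [this]
    · apply Finset.sum_congr rfl
      intro q hq
      obtain ⟨h1, h2⟩ := hpos (ℓ*d + q + i + d) (by have := (Finset.mem_Icc.mp hq).1; omega)
      rw [Real.log_div h1.ne' h2.ne']
      have : ℓ*d + (q+i+d) = ℓ*d + q + i + d := by omega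
      rw [this]
      push_cast
      ring
  simp only [hlog]
  have expand : ∑ j ∈ Finset.range (k+1), (-1:ℝ)^j * (k.choose j) *
      ((∑ m ∈ Finset.Icc 1 d,
          (Real.log (((m0+j)*d + (m+i) : ℕ):ℝ) - Real.log ((((m0+j)*d + (m+i) : ℕ):ℝ) + α + 1)))
        + ∑ q ∈ Finset.Icc 1 s,
          2 * (Real.log (((m0+j)*d + (q+i+d) : ℕ):ℝ)
            - Real.log ((((m0+j)*d + (q+i+d) : ℕ):ℝ) + α + 1)))
      = (∑ m ∈ Finset.Icc 1 d, ∑ j ∈ Finset.range (k+1), (-1:ℝ)^j * (k.choose j) *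
          (Real.log (((m0+j)*d + (m+i) : ℕ):ℝ) - Real.log ((((m0+j)*d + (m+i) : ℕ):ℝ) + α + 1)))
        + ∑ q ∈ Finset.Icc 1 s, 2 * ∑ j ∈ Finset.range (k+1), (-1:ℝ)^j * (k.choose j) *
          (Real.log (((m0+j)*d + (q+i+d) : ℕ):ℝ)
            - Real.log ((((m0+j)*d + (q+i+d) : ℕ):ℝ) + α + 1)) := by
    simp only [mul_add, Finset.sum_add_distrib, Finset.mul_sum]
    rw [Finset.sum_comm, Finset.sum_comm (s := Finset.range (k+1)) (t := Finset.Icc 1 s)]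
    congr 1
    apply Finset.sum_congr rfl
    intro q _
    apply Finset.sum_congr rfl
    intro j _
    ring
  rw [expand]
  apply add_nonpos
  · apply Finset.sum_nonpos
    intro m hm
    exact factor_alt α hα d hd (m+i) (by have := (Finset.mem_Icc.mp hm).1; omega) k m0
  · apply Finset.sum_nonpos
    intro q hq
    have := factor_alt α hα d hd (q+i+d) (by omega) k m0
    linarith
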